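/- With the random variables of the sampling-without-replacement scheme above, each block size X_k = Σ_{j=2}^N Y_{j(k-1)} δ_{jk} is binomially distributed with parameters N-1 and p₀ (for each fixed k ≤ B), where Y_{j0} = 1. -/

import Mathlib

open MeasureTheory ProbabilityTheory

attribute [local instance] Classical.propDecidable

private lemma ite_irrel {α : Sort*} {c : Prop} {i1 i2 : Decidable c} (a b : α) :
    @ite _ c i1 a b = @ite _ c i2 a b := by
  have h := Subsingleton.elim i1 i2
  rw [h]

private lemma telescope_prod (p₀ : ℝ) : ∀ n : ℕ, (∀ j : ℕ, j < n → 1 - (j:ℝ) * p₀ ≠ 0) →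
    ∏ m ∈ Finset.Icc 1 n, (1 - p₀ / (1 - ((m:ℝ) - 1) * p₀)) = 1 - (n:ℝ) * p₀ := by
  intro n
  induction n with
  | zero => simp
  | succ n ih =>
    intro h
    rw [Finset.prod_Icc_succ_top (by omega : 1 ≤ n + 1), ih (fun j hj => h j (by omega))]
    have hne : 1 - (n:ℝ) * p₀ ≠ 0 := h n (by omega)
    have h1 : ((n+1 : ℕ):ℝ) - 1 = (n:ℝ) := by push_cast; ring
    rw [h1]
    field_simp
    push_cast; ring

private lemma indepFun_sum_aux {Ω : Type*} [MeasurableSpace Ω] {μ : Measure Ω}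
    {δ : ℕ × ℕ → Ω → Bool}
    (hmeas : ∀ jk, Measurable (δ jk))
    (hindep : iIndepFun δ μ)
    (K : Finset ℕ) (g : ℕ → (↥K → Bool) → ℕ)
    (s : Finset ℕ) (a : ℕ) (ha : a ∉ s) :
    IndepFun (fun ω => ∑ j ∈ s, g j (fun m => δ (j, ↑m) ω))
      (fun ω => g a (fun m => δ (a, ↑m) ω)) μ := by
  have hdisj : Disjoint (s ×ˢ K) ({a} ×ˢ K) := by
    rw [Finset.disjoint_left]
    rintro ⟨x1, x2⟩ hx hx'
    rw [Finset.mem_product] at hx hx'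
    rw [Finset.mem_singleton] at hx'
    exact ha (hx'.1 ▸ hx.1)
  have base := hindep.indepFun_finset (s ×ˢ K) ({a} ×ˢ K) hdisj hmeas
  have comp := base.comp
    (φ := fun v : (x : ↥(s ×ˢ K)) → Bool =>
      ∑ j ∈ s.attach, g ↑j (fun m => v ⟨(↑j, ↑m), Finset.mem_product.mpr ⟨j.2, m.2⟩⟩))
    (ψ := fun v : (x : ↥({a} ×ˢ K)) → Bool =>
      g a (fun m => v ⟨(a, ↑m), Finset.mem_product.mpr ⟨Finset.mem_singleton_self a, m.2⟩⟩))
    Measurable.of_discrete Measurable.of_discrete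
  convert comp using 1
  funext ω
  exact (Finset.sum_attach s fun j => g j (fun m => δ (j, ↑m) ω)).symm
  rfl

/-- Block sizes in the sampling-without-replacement scheme are binomial:
with independent Bernoulli variables `δ_{jk}` of parameter `p₀/(1-(k-1)p₀)`
and survival indicators `Y_{jk} = Π_{m=1}^k (1-δ_{jm})` (with `Y_{j0} = 1`),
the block size `X_k = Σ_{j=2}^N Y_{j(k-1)} δ_{jk}` is binomially distributed
with parameters `N-1` and `p₀`. -/
theorem block_size_binomial
    {Ω : Type*} [MeasurableSpace Ω] (μ : Measure Ω) [IsProbabilityMeasure μ]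
    (B N : ℕ) (p₀ : ℝ) (hp0 : 0 < p₀) (hpB : p₀ ≤ 1 / (2 * B)) (hB : 1 ≤ B)
    (hN : 2 ≤ N)
    (δ : ℕ × ℕ → Ω → Bool)
    (hmeas : ∀ jk, Measurable (δ jk))
    (hindep : iIndepFun δ μ)
    (hbern : ∀ j ∈ Finset.Icc 2 N, ∀ k ∈ Finset.Icc 1 B,
      μ {ω | δ (j, k) ω = true} =
        ENNReal.ofReal (p₀ / (1 - ((k : ℝ) - 1) * p₀)))
    (k : ℕ) (hk : k ∈ Finset.Icc 1 B) :
    ∀ i : ℕ,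
      μ {ω | (∑ j ∈ Finset.Icc 2 N,
          if (∀ m ∈ Finset.Icc 1 (k - 1), δ (j, m) ω = false) ∧
              δ (j, k) ω = true then 1 else 0) = i} =
        ENNReal.ofReal
          (((N - 1).choose i : ℝ) * p₀ ^ i * (1 - p₀) ^ (N - 1 - i)) := by
  intro i
  obtain ⟨hk1, hkB⟩ := Finset.mem_Icc.mp hk
  have hBpos : (0:ℝ) < B := by exact_mod_cast hB
  have hmul : ∀ m : ℕ, m ≤ B → (m:ℝ) * p₀ ≤ 1/2 := by
    intro m hm
    have hmB : (m:ℝ) ≤ B := by exact_mod_cast hm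
    calc (m:ℝ) * p₀ ≤ (B:ℝ) * (1/(2*B)) := mul_le_mul hmB hpB hp0.le hBpos.le
      _ = 1/2 := by field_simp
  have hp1 : p₀ ≤ 1/2 := by have := hmul 1 hB; simpa using this
  have hp01 : (0:ℝ) ≤ 1 - p₀ := by linarith
  have hden : ∀ m : ℕ, m ≤ B → (0:ℝ) < 1 - ((m:ℝ) - 1) * p₀ := by
    intro m hm
    have := hmul m hm
    nlinarith
  have hqle : ∀ m : ℕ, m ≤ B → p₀ / (1 - ((m:ℝ) - 1) * p₀) ≤ 1 := by
    intro m hm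
    rw [div_le_one (hden m hm)]
    have := hmul m hm
    nlinarith
  have hq0 : ∀ m : ℕ, m ≤ B → 0 ≤ p₀ / (1 - ((m:ℝ) - 1) * p₀) :=
    fun m hm => le_of_lt (div_pos hp0 (hden m hm))
  -- single variable probabilities
  have ptrue : ∀ j ∈ Finset.Icc 2 N, ∀ m ∈ Finset.Icc 1 B,
      μ (δ (j, m) ⁻¹' {true}) = ENNReal.ofReal (p₀ / (1 - ((m : ℝ) - 1) * p₀)) := by
    intro j hj m hm
    have := hbern j hj m hm
    convert this using 2
    rfl
  have pfalse : ∀ j ∈ Finset.Icc 2 N, ∀ m ∈ Finset.Icc 1 B,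
      μ (δ (j, m) ⁻¹' {false}) = ENNReal.ofReal (1 - p₀ / (1 - ((m : ℝ) - 1) * p₀)) := by
    intro j hj m hm
    have hmB := (Finset.mem_Icc.mp hm).2
    have hcompl : δ (j, m) ⁻¹' {false} = (δ (j, m) ⁻¹' {true})ᶜ := by
      ext ω; simp
    rw [hcompl, measure_compl ((hmeas (j,m)) (measurableSet_singleton _)) (measure_ne_top μ _),
      ptrue j hj m hm, measure_univ]
    rw [ENNReal.ofReal_sub _ (hq0 m hmB), ENNReal.ofReal_one]
  -- probability of the "block membership" event
  have pA : ∀ a ∈ Finset.Icc 2 N,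
      μ {ω | (∀ m ∈ Finset.Icc 1 (k-1), δ (a, m) ω = false) ∧ δ (a, k) ω = true}
        = ENNReal.ofReal p₀ := by
    intro a haN
    have hSet : {ω | (∀ m ∈ Finset.Icc 1 (k-1), δ (a, m) ω = false) ∧ δ (a, k) ω = true}
        = ⋂ x ∈ (Finset.Icc 1 k).image (fun m => (a, m)),
            δ x ⁻¹' (if x.2 = k then {true} else {false}) := by
      ext ω
      simp only [Set.mem_setOf_eq, Set.mem_iInter, Finset.mem_image]
      constructor
      · rintro ⟨h1, h2⟩ x ⟨m, hm, rfl⟩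
        obtain ⟨hm1, hm2⟩ := Finset.mem_Icc.mp hm
        by_cases hmk : m = k
        · subst hmk; simp [h2]
        · have hmem : m ∈ Finset.Icc 1 (k-1) := Finset.mem_Icc.mpr ⟨hm1, by omega⟩
          simp [hmk, h1 m hmem]
      · intro h
        constructor
        · intro m hm
          obtain ⟨hm1, hm2⟩ := Finset.mem_Icc.mp hm
          have hmk : m ≠ k := by omega
          have := h (a, m) ⟨m, Finset.mem_Icc.mpr ⟨hm1, by omega⟩, rfl⟩
          simpa [hmk] using this
        · have := h (a, k) ⟨k, Finset.mem_Icc.mpr ⟨hk1, le_rfl⟩, rfl⟩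
          simpa using this
    rw [hSet, hindep.meas_biInter (fun x _ => ⟨_, MeasurableSet.of_discrete, rfl⟩)]
    rw [Finset.prod_image (by rintro x - y - hxy; simpa using congrArg Prod.snd hxy)]
    have hsplit : Finset.Icc 1 k = insert k (Finset.Icc 1 (k-1)) := by
      ext m; simp only [Finset.mem_Icc, Finset.mem_insert]; omega
    rw [hsplit, Finset.prod_insert (by simp only [Finset.mem_Icc]; omega)]
    have hgk : μ (δ (a, k) ⁻¹' (if k = k then {true} else {false}))
        = ENNReal.ofReal (p₀ / (1 - ((k:ℝ) - 1) * p₀)) := by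
      rw [if_pos rfl]; exact ptrue a haN k hk
    have hgm : ∀ m ∈ Finset.Icc 1 (k-1),
        μ (δ (a, m) ⁻¹' (if m = k then {true} else {false}))
          = ENNReal.ofReal (1 - p₀ / (1 - ((m:ℝ) - 1) * p₀)) := by
      intro m hm
      obtain ⟨hm1, hm2⟩ := Finset.mem_Icc.mp hm
      have hmk : m ≠ k := by omega
      rw [if_neg hmk]
      exact pfalse a haN m (Finset.mem_Icc.mpr ⟨hm1, by omega⟩)
    rw [hgk, Finset.prod_congr rfl hgm,
      ← ENNReal.ofReal_prod_of_nonneg (fun m hm => by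
        have hmB : m ≤ B := by
          have := (Finset.mem_Icc.mp hm).2; omega
        have := hqle m hmB; linarith),
      telescope_prod p₀ (k-1) (fun j hj => by
        have hjB : j ≤ B := by omega
        have := hmul j hjB; nlinarith),
      ← ENNReal.ofReal_mul (hq0 k hkB)]
    congr 1
    have hcast : ((k-1:ℕ):ℝ) = (k:ℝ) - 1 := by
      push_cast [hk1]; ring
    rw [hcast]
    exact div_mul_cancel₀ p₀ (ne_of_gt (hden k hkB))
  -- measurability of the indicator condition
  have hcondmeas : ∀ j : ℕ, MeasurableSet
      {ω | (∀ m ∈ Finset.Icc 1 (k-1), δ (j, m) ω = false) ∧ δ (j, k) ω = true} := by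
    intro j
    have hrw : {ω | (∀ m ∈ Finset.Icc 1 (k-1), δ (j, m) ω = false) ∧ δ (j, k) ω = true}
        = (⋂ m ∈ Finset.Icc 1 (k-1), δ (j, m) ⁻¹' {false}) ∩ δ (j, k) ⁻¹' {true} := by
      ext ω; simp [Set.mem_iInter]
    rw [hrw]
    exact (Finset.measurableSet_biInter _
      (fun m _ => (hmeas _) (measurableSet_singleton _))).inter
      ((hmeas _) (measurableSet_singleton _))
  have hindmeas : ∀ j : ℕ, Measurable (fun ω =>
      if (∀ m ∈ Finset.Icc 1 (k-1), δ (j, m) ω = false) ∧ δ (j, k) ω = true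
      then (1:ℕ) else 0) :=
    fun j => Measurable.ite (hcondmeas j) measurable_const measurable_const
  -- main induction
  have key : ∀ s : Finset ℕ, s ⊆ Finset.Icc 2 N → ∀ n : ℕ,
      μ {ω | (∑ j ∈ s, if (∀ m ∈ Finset.Icc 1 (k - 1), δ (j, m) ω = false) ∧
          δ (j, k) ω = true then 1 else 0) = n} =
        ENNReal.ofReal ((s.card.choose n : ℝ) * p₀ ^ n * (1 - p₀) ^ (s.card - n)) := by
    intro s
    induction s using Finset.induction_on with
    | empty =>
      intro _ n
      cases n with
      | zero => simp
      | succ n => simp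
    | @insert a s' ha ih =>
      intro hsub n
      have haN : a ∈ Finset.Icc 2 N := hsub (Finset.mem_insert_self a s')
      have hs'sub : s' ⊆ Finset.Icc 2 N := fun x hx => hsub (Finset.mem_insert_of_mem hx)
      have hFG : IndepFun
          (fun ω => ∑ j ∈ s', if (∀ m ∈ Finset.Icc 1 (k - 1), δ (j, m) ω = false) ∧
            δ (j, k) ω = true then (1:ℕ) else 0)
          (fun ω => if (∀ m ∈ Finset.Icc 1 (k - 1), δ (a, m) ω = false) ∧
            δ (a, k) ω = true then (1:ℕ) else 0) μ := by
        have h0 := indepFun_sum_aux hmeas hindep (Finset.Icc 1 k)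
          (fun j w => if (∀ m, (hm : m ∈ Finset.Icc 1 (k-1)) →
              w ⟨m, Finset.mem_Icc.mpr ⟨(Finset.mem_Icc.mp hm).1,
                le_trans (Finset.mem_Icc.mp hm).2 (Nat.sub_le k 1)⟩⟩ = false) ∧
              w ⟨k, Finset.mem_Icc.mpr ⟨hk1, le_rfl⟩⟩ = true then 1 else 0)
          s' a ha
        convert h0 using 1
        · funext ω
          exact Finset.sum_congr rfl fun j _ => ite_irrel 1 0
        · funext ω
          exact ite_irrel 1 0
      have hFmeas : Measurable (fun ω => ∑ j ∈ s',
          if (∀ m ∈ Finset.Icc 1 (k - 1), δ (j, m) ω = false) ∧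
            δ (j, k) ω = true then (1:ℕ) else 0) :=
        Finset.measurable_sum _ (fun j _ => hindmeas j)
      have hGmeas : Measurable (fun ω =>
          if (∀ m ∈ Finset.Icc 1 (k - 1), δ (a, m) ω = false) ∧
            δ (a, k) ω = true then (1:ℕ) else 0) := hindmeas a
      have hFm : ∀ m : ℕ, μ ((fun ω => ∑ j ∈ s',
          if (∀ m' ∈ Finset.Icc 1 (k - 1), δ (j, m') ω = false) ∧
            δ (j, k) ω = true then (1:ℕ) else 0) ⁻¹' {m}) =
          ENNReal.ofReal ((s'.card.choose m : ℝ) * p₀ ^ m * (1 - p₀) ^ (s'.card - m)) :=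
        fun m => ih hs'sub m
      have hG1 : μ ((fun ω =>
          if (∀ m ∈ Finset.Icc 1 (k - 1), δ (a, m) ω = false) ∧
            δ (a, k) ω = true then (1:ℕ) else 0) ⁻¹' {1}) = ENNReal.ofReal p₀ := by
        have hset : (fun ω =>
            if (∀ m ∈ Finset.Icc 1 (k - 1), δ (a, m) ω = false) ∧
              δ (a, k) ω = true then (1:ℕ) else 0) ⁻¹' {1}
            = {ω | (∀ m ∈ Finset.Icc 1 (k-1), δ (a, m) ω = false) ∧ δ (a, k) ω = true} := by
          ext ω
          by_cases h : (∀ m ∈ Finset.Icc 1 (k-1), δ (a, m) ω = false) ∧ δ (a, k) ω = true <;>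
            simp [h]
        rw [hset]; exact pA a haN
      have hG0 : μ ((fun ω =>
          if (∀ m ∈ Finset.Icc 1 (k - 1), δ (a, m) ω = false) ∧
            δ (a, k) ω = true then (1:ℕ) else 0) ⁻¹' {0}) = ENNReal.ofReal (1 - p₀) := by
        have hset : (fun ω =>
            if (∀ m ∈ Finset.Icc 1 (k - 1), δ (a, m) ω = false) ∧
              δ (a, k) ω = true then (1:ℕ) else 0) ⁻¹' {0}
            = {ω | (∀ m ∈ Finset.Icc 1 (k-1), δ (a, m) ω = false) ∧ δ (a, k) ω = true}ᶜ := by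
          ext ω
          by_cases h : (∀ m ∈ Finset.Icc 1 (k-1), δ (a, m) ω = false) ∧ δ (a, k) ω = true <;>
            simp [h]
        rw [hset, measure_compl (hcondmeas a) (measure_ne_top μ _), pA a haN, measure_univ,
          ENNReal.ofReal_sub _ hp0.le, ENNReal.ofReal_one]
      rw [Finset.card_insert_of_notMem ha]
      cases n with
      | zero =>
        have hE : {ω | (∑ j ∈ insert a s',
            if (∀ m ∈ Finset.Icc 1 (k - 1), δ (j, m) ω = false) ∧
              δ (j, k) ω = true then 1 else 0) = 0}
            = ((fun ω => ∑ j ∈ s', if (∀ m ∈ Finset.Icc 1 (k - 1), δ (j, m) ω = false) ∧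
                δ (j, k) ω = true then (1:ℕ) else 0) ⁻¹' {0}) ∩
              ((fun ω => if (∀ m ∈ Finset.Icc 1 (k - 1), δ (a, m) ω = false) ∧
                δ (a, k) ω = true then (1:ℕ) else 0) ⁻¹' {0}) := by
          ext ω
          simp only [Set.mem_setOf_eq, Set.mem_inter_iff, Set.mem_preimage,
            Set.mem_singleton_iff, Finset.sum_insert ha]
          omega
        rw [hE, hFG.measure_inter_preimage_eq_mul _ _ (measurableSet_singleton _)
          (measurableSet_singleton _), hFm 0, hG0,
          ← ENNReal.ofReal_mul (by positivity)]
        congr 1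
        simp only [Nat.choose_zero_right, Nat.cast_one, pow_zero, Nat.sub_zero]
        rw [pow_succ]
        ring
      | succ n =>
        have hE : {ω | (∑ j ∈ insert a s',
            if (∀ m ∈ Finset.Icc 1 (k - 1), δ (j, m) ω = false) ∧
              δ (j, k) ω = true then 1 else 0) = n + 1}
            = (((fun ω => ∑ j ∈ s', if (∀ m ∈ Finset.Icc 1 (k - 1), δ (j, m) ω = false) ∧
                δ (j, k) ω = true then (1:ℕ) else 0) ⁻¹' {n+1}) ∩
              ((fun ω => if (∀ m ∈ Finset.Icc 1 (k - 1), δ (a, m) ω = false) ∧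
                δ (a, k) ω = true then (1:ℕ) else 0) ⁻¹' {0})) ∪
              (((fun ω => ∑ j ∈ s', if (∀ m ∈ Finset.Icc 1 (k - 1), δ (j, m) ω = false) ∧
                δ (j, k) ω = true then (1:ℕ) else 0) ⁻¹' {n}) ∩
              ((fun ω => if (∀ m ∈ Finset.Icc 1 (k - 1), δ (a, m) ω = false) ∧
                δ (a, k) ω = true then (1:ℕ) else 0) ⁻¹' {1})) := by
          ext ω
          simp only [Set.mem_setOf_eq, Set.mem_union, Set.mem_inter_iff, Set.mem_preimage,
            Set.mem_singleton_iff, Finset.sum_insert ha]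
          have hval : (if (∀ m ∈ Finset.Icc 1 (k - 1), δ (a, m) ω = false) ∧
              δ (a, k) ω = true then (1:ℕ) else 0) = 0 ∨
              (if (∀ m ∈ Finset.Icc 1 (k - 1), δ (a, m) ω = false) ∧
              δ (a, k) ω = true then (1:ℕ) else 0) = 1 := by
            by_cases h : (∀ m ∈ Finset.Icc 1 (k-1), δ (a, m) ω = false) ∧ δ (a, k) ω = true
            · right; rw [if_pos h]
            · left; rw [if_neg h]
          omega
        have hdisj2 : Disjoint
            (((fun ω => ∑ j ∈ s', if (∀ m ∈ Finset.Icc 1 (k - 1), δ (j, m) ω = false) ∧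
                δ (j, k) ω = true then (1:ℕ) else 0) ⁻¹' {n+1}) ∩
              ((fun ω => if (∀ m ∈ Finset.Icc 1 (k - 1), δ (a, m) ω = false) ∧
                δ (a, k) ω = true then (1:ℕ) else 0) ⁻¹' {0}))
            (((fun ω => ∑ j ∈ s', if (∀ m ∈ Finset.Icc 1 (k - 1), δ (j, m) ω = false) ∧
                δ (j, k) ω = true then (1:ℕ) else 0) ⁻¹' {n}) ∩
              ((fun ω => if (∀ m ∈ Finset.Icc 1 (k - 1), δ (a, m) ω = false) ∧
                δ (a, k) ω = true then (1:ℕ) else 0) ⁻¹' {1})) := by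
          rw [Set.disjoint_left]
          rintro ω ⟨-, h0⟩ ⟨-, h1⟩
          rw [Set.mem_preimage, Set.mem_singleton_iff] at h0 h1
          omega
        rw [hE, measure_union hdisj2
          ((hFmeas (measurableSet_singleton _)).inter (hGmeas (measurableSet_singleton _))),
          hFG.measure_inter_preimage_eq_mul _ _ (measurableSet_singleton _)
            (measurableSet_singleton _),
          hFG.measure_inter_preimage_eq_mul _ _ (measurableSet_singleton _)
            (measurableSet_singleton _),
          hFm (n+1), hFm n, hG0, hG1,
          ← ENNReal.ofReal_mul (by positivity), ← ENNReal.ofReal_mul (by positivity),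
          ← ENNReal.ofReal_add (by positivity) (by positivity)]
        congr 1
        have hc1 : s'.card + 1 - (n + 1) = s'.card - n := by omega
        rw [hc1, Nat.choose_succ_succ]
        rcases le_or_gt (n+1) s'.card with hle | hlt
        · have h2 : s'.card - (n+1) + 1 = s'.card - n := by omega
          rw [← h2, pow_succ]
          push_cast
          ring
        · have h3 : s'.card.choose (n+1) = 0 := Nat.choose_eq_zero_of_lt hlt
          have h4 : s'.card - n = 0 := by omega
          have h5 : s'.card - (n+1) = 0 := by omega
          rw [h3, h4, h5]
          push_cast
          ring
  have hfin := key (Finset.Icc 2 N) (subset_refl _) i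
  rw [Nat.card_Icc] at hfin
  have hcard : N + 1 - 2 = N - 1 := by omega
  rw [hcard] at hfin
  exact hfin
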